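/- Translational invariants of a screw: in the polynomial ring R = ℚ[t₁, t₂, t₃, w₁, w₂, w₃, v₁, v₂, v₃], with g₁ = −t₃·w₂ + t₂·w₃ + v₁, g₂ = t₃·w₁ − t₁·w₃ + v₂, g₃ = −t₂·w₁ + t₁·w₂ + v₃, the intersection of the subalgebra A = Algebra.adjoin ℚ {w₁, w₂, w₃, g₁, g₂, g₃} with the subalgebra Algebra.adjoin ℚ {w₁, w₂, w₃, v₁, v₂, v₃} of polynomials in the variables w and v alone equals Algebra.adjoin ℚ {w₁, w₂, w₃, w₁·v₁ + w₂·v₂ + w₃·v₃}. -/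

import Mathlib

open MvPolynomial

noncomputable section

namespace ScrewExample

/-- The polynomial ring `ℚ[t₁, t₂, t₃, w₁, w₂, w₃, v₁, v₂, v₃]`. -/
abbrev R := MvPolynomial (Fin 9) ℚ

def t₁ : R := X 0
def t₂ : R := X 1
def t₃ : R := X 2
def w₁ : R := X 3
def w₂ : R := X 4
def w₃ : R := X 5
def v₁ : R := X 6
def v₂ : R := X 7
def v₃ : R := X 8

def g₁ : R := -t₃ * w₂ + t₂ * w₃ + v₁
def g₂ : R := t₃ * w₁ - t₁ * w₃ + v₂
def g₃ : R := -t₂ * w₁ + t₁ * w₂ + v₃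

/-! ### Generic machinery: substitutions sending variables to monomials -/

section Generic

variable {n m : ℕ}

/-- The exponent map induced by a family of exponent vectors. -/
def expMap (u : Fin n → (Fin m →₀ ℕ)) : (Fin n →₀ ℕ) →ₗ[ℕ] (Fin m →₀ ℕ) :=
  Finsupp.lift _ ℕ _ u

lemma expMap_single (u : Fin n → (Fin m →₀ ℕ)) (i : Fin n) (k : ℕ) :
    expMap u (Finsupp.single i k) = k • u i := by
  simp [expMap]

lemma expMap_apply (u : Fin n → (Fin m →₀ ℕ)) (α : Fin n →₀ ℕ) (j : Fin m) :
    expMap u α j = ∑ i, α i * u i j := by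
  classical
  rw [expMap, Finsupp.lift_apply, Finsupp.sum_apply, Finsupp.sum_fintype]
  · simp [Finsupp.smul_apply]
  · intro i; simp

lemma monomial_one_pow (a : Fin m →₀ ℕ) (k : ℕ) :
    (monomial a (1:ℚ)) ^ k = monomial (k • a) 1 := by
  induction k with
  | zero => simp
  | succ k ih => rw [pow_succ, ih, monomial_mul, one_mul, succ_nsmul]

lemma aeval_family_monomial (u : Fin n → (Fin m →₀ ℕ)) (α : Fin n →₀ ℕ) (c : ℚ) :
    aeval (fun i => monomial (u i) (1:ℚ)) (monomial α c) = monomial (expMap u α) c := by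
  induction α using Finsupp.induction with
  | zero => simp [aeval_monomial]
  | single_add i k β hiβ hk ih =>
      have : (monomial (Finsupp.single i k + β)) c
          = monomial (Finsupp.single i k) (1:ℚ) * monomial β c := by
        rw [monomial_mul, one_mul]
      rw [this, map_mul, ih, ← X_pow_eq_monomial, map_pow, aeval_X,
        monomial_one_pow, monomial_mul, one_mul, map_add, expMap_single]

lemma coeff_aeval_family (u : Fin n → (Fin m →₀ ℕ)) (hu : Function.Injective (expMap u))
    (P : MvPolynomial (Fin n) ℚ) (γ : Fin n →₀ ℕ) :
    coeff (expMap u γ) (aeval (fun i => monomial (u i) (1:ℚ)) P) = coeff γ P := by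
  induction P using MvPolynomial.induction_on' with
  | monomial α c =>
      rw [aeval_family_monomial, coeff_monomial, coeff_monomial]
      by_cases h : α = γ
      · simp [h]
      · rw [if_neg h, if_neg (fun he => h (hu he))]
  | add p q hp hq => rw [map_add, coeff_add, hp, hq, coeff_add]

lemma coeff_aeval_family_notmem (u : Fin n → (Fin m →₀ ℕ))
    (P : MvPolynomial (Fin n) ℚ) (δ : Fin m →₀ ℕ) (hδ : δ ∉ Set.range (expMap u)) :
    coeff δ (aeval (fun i => monomial (u i) (1:ℚ)) P) = 0 := by
  induction P using MvPolynomial.induction_on' with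
  | monomial α c =>
      rw [aeval_family_monomial, coeff_monomial, if_neg]
      exact fun he => hδ ⟨α, he⟩
  | add p q hp hq => rw [map_add, coeff_add, hp, hq, add_zero]

lemma injective_aeval_family (u : Fin n → (Fin m →₀ ℕ)) (hu : Function.Injective (expMap u)) :
    Function.Injective (aeval (R := ℚ) (fun i => monomial (u i) (1:ℚ))) := by
  intro P Q h
  ext γ
  rw [← coeff_aeval_family u hu P γ, ← coeff_aeval_family u hu Q γ, h]

lemma X_eq_monomial' (j : Fin m) : (X j : MvPolynomial (Fin m) ℚ) = monomial (Finsupp.single j 1) 1 := by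
  rw [← X_pow_eq_monomial, pow_one]

end Generic

/-! ### Concrete exponent families -/

abbrev R4 := MvPolynomial (Fin 4) ℚ

/-- exponents for `β₀ : X3 ↦ X0·X3` on `ℚ[X0,…,X3]` -/
def ub0 : Fin 4 → (Fin 4 →₀ ℕ) :=
  ![Finsupp.single 0 1, Finsupp.single 1 1, Finsupp.single 2 1,
    Finsupp.single 0 1 + Finsupp.single 3 1]

/-- exponents for `β₂ : X3 ↦ X2·X3` on `ℚ[X0,…,X3]` -/
def ub2 : Fin 4 → (Fin 4 →₀ ℕ) :=
  ![Finsupp.single 0 1, Finsupp.single 1 1, Finsupp.single 2 1,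
    Finsupp.single 2 1 + Finsupp.single 3 1]

/-- exponents for `μ₃ : vᵢ ↦ w₃·vᵢ` on `R` -/
def u3 : Fin 9 → (Fin 9 →₀ ℕ) :=
  ![Finsupp.single 0 1, Finsupp.single 1 1, Finsupp.single 2 1,
    Finsupp.single 3 1, Finsupp.single 4 1, Finsupp.single 5 1,
    Finsupp.single 5 1 + Finsupp.single 6 1,
    Finsupp.single 5 1 + Finsupp.single 7 1,
    Finsupp.single 5 1 + Finsupp.single 8 1]

/-- exponents for `J : (X0,X1,X2,X3) ↦ (w₁,w₂,w₃,w₃v₃)` -/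
def uJ : Fin 4 → (Fin 9 →₀ ℕ) :=
  ![Finsupp.single 3 1, Finsupp.single 4 1, Finsupp.single 5 1,
    Finsupp.single 5 1 + Finsupp.single 8 1]

@[simp] lemma ub0_0 : ub0 0 = Finsupp.single 0 1 := rfl
@[simp] lemma ub0_1 : ub0 1 = Finsupp.single 1 1 := rfl
@[simp] lemma ub0_2 : ub0 2 = Finsupp.single 2 1 := rfl
@[simp] lemma ub0_3 : ub0 3 = Finsupp.single 0 1 + Finsupp.single 3 1 := rfl
@[simp] lemma ub2_0 : ub2 0 = Finsupp.single 0 1 := rfl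
@[simp] lemma ub2_1 : ub2 1 = Finsupp.single 1 1 := rfl
@[simp] lemma ub2_2 : ub2 2 = Finsupp.single 2 1 := rfl
@[simp] lemma ub2_3 : ub2 3 = Finsupp.single 2 1 + Finsupp.single 3 1 := rfl
@[simp] lemma u3_0 : u3 0 = Finsupp.single 0 1 := rfl
@[simp] lemma u3_1 : u3 1 = Finsupp.single 1 1 := rfl
@[simp] lemma u3_2 : u3 2 = Finsupp.single 2 1 := rfl
@[simp] lemma u3_3 : u3 3 = Finsupp.single 3 1 := rfl
@[simp] lemma u3_4 : u3 4 = Finsupp.single 4 1 := rfl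
@[simp] lemma u3_5 : u3 5 = Finsupp.single 5 1 := rfl
@[simp] lemma u3_6 : u3 6 = Finsupp.single 5 1 + Finsupp.single 6 1 := rfl
@[simp] lemma u3_7 : u3 7 = Finsupp.single 5 1 + Finsupp.single 7 1 := rfl
@[simp] lemma u3_8 : u3 8 = Finsupp.single 5 1 + Finsupp.single 8 1 := rfl
@[simp] lemma uJ_0 : uJ 0 = Finsupp.single 3 1 := rfl
@[simp] lemma uJ_1 : uJ 1 = Finsupp.single 4 1 := rfl
@[simp] lemma uJ_2 : uJ 2 = Finsupp.single 5 1 := rfl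
@[simp] lemma uJ_3 : uJ 3 = Finsupp.single 5 1 + Finsupp.single 8 1 := rfl

lemma sum9 (f : Fin 9 → ℕ) :
    ∑ i, f i = f 0 + f 1 + f 2 + f 3 + f 4 + f 5 + f 6 + f 7 + f 8 := by
  simp [Fin.sum_univ_succ]
  ring_nf

lemma expMap_ub0 (γ : Fin 4 →₀ ℕ) : expMap ub0 γ = γ + Finsupp.single 0 (γ 3) := by
  ext j
  rw [expMap_apply, Fin.sum_univ_four]
  fin_cases j <;>
    simp (config := { decide := true }) [Finsupp.single_apply, Finsupp.add_apply]

lemma expMap_ub2 (γ : Fin 4 →₀ ℕ) : expMap ub2 γ = γ + Finsupp.single 2 (γ 3) := by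
  ext j
  rw [expMap_apply, Fin.sum_univ_four]
  fin_cases j <;>
    simp (config := { decide := true }) [Finsupp.single_apply, Finsupp.add_apply]

lemma expMap_u3 (α : Fin 9 →₀ ℕ) :
    expMap u3 α = α + Finsupp.single 5 (α 6 + α 7 + α 8) := by
  ext j
  rw [expMap_apply, sum9]
  fin_cases j <;>
    simp (config := { decide := true }) [Finsupp.single_apply, Finsupp.add_apply] <;> ring

lemma expMap_uJ (α : Fin 4 →₀ ℕ) :
    expMap uJ α = Finsupp.single 3 (α 0) + Finsupp.single 4 (α 1)
      + Finsupp.single 5 (α 2 + α 3) + Finsupp.single 8 (α 3) := by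
  ext j
  rw [expMap_apply, Fin.sum_univ_four]
  fin_cases j <;>
    simp (config := { decide := true }) [Finsupp.single_apply, Finsupp.add_apply] <;> ring

lemma inj_ub0 : Function.Injective (expMap ub0) := by
  intro γ δ h
  rw [expMap_ub0, expMap_ub0] at h
  have h3 : γ 3 = δ 3 := by
    have := DFunLike.congr_fun h 3
    simpa [Finsupp.add_apply, Finsupp.single_apply] using this
  rw [h3] at h
  exact add_right_cancel h

lemma inj_ub2 : Function.Injective (expMap ub2) := by
  intro γ δ h
  rw [expMap_ub2, expMap_ub2] at h
  have h3 : γ 3 = δ 3 := by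
    have := DFunLike.congr_fun h 3
    simpa [Finsupp.add_apply, Finsupp.single_apply] using this
  rw [h3] at h
  exact add_right_cancel h

lemma inj_u3 : Function.Injective (expMap u3) := by
  intro γ δ h
  rw [expMap_u3, expMap_u3] at h
  have h6 : γ 6 = δ 6 := by
    have := DFunLike.congr_fun h 6
    simpa [Finsupp.add_apply, Finsupp.single_apply] using this
  have h7 : γ 7 = δ 7 := by
    have := DFunLike.congr_fun h 7
    simpa [Finsupp.add_apply, Finsupp.single_apply] using this
  have h8 : γ 8 = δ 8 := by
    have := DFunLike.congr_fun h 8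
    simpa [Finsupp.add_apply, Finsupp.single_apply] using this
  rw [h6, h7, h8] at h
  exact add_right_cancel h

lemma inj_uJ : Function.Injective (expMap uJ) := by
  intro γ δ h
  rw [expMap_uJ, expMap_uJ] at h
  have e3 := DFunLike.congr_fun h 3
  have e4 := DFunLike.congr_fun h 4
  have e5 := DFunLike.congr_fun h 5
  have e8 := DFunLike.congr_fun h 8
  simp [Finsupp.add_apply, Finsupp.single_apply] at e3 e4 e5 e8
  ext i
  fin_cases i <;> simp <;> omega

/-! ### The division lemma -/

lemma division_lemma (H K : R4)
    (h : aeval (fun i => monomial (ub0 i) (1:ℚ)) H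
        = aeval (fun i => monomial (ub2 i) (1:ℚ)) K) :
    ∃ G : R4, aeval (fun i => monomial (ub2 i) (1:ℚ)) G = H := by
  classical
  have hsupp : ∀ γ ∈ H.support, γ 3 ≤ γ 2 := by
    intro γ hγ
    have hne : coeff γ H ≠ 0 := mem_support_iff.mp hγ
    have hmem : expMap ub0 γ ∈ Set.range (expMap ub2) := by
      by_contra hr
      exact hne (by
        rw [← coeff_aeval_family ub0 inj_ub0 H γ, h,
          coeff_aeval_family_notmem ub2 K _ hr])
    obtain ⟨δ, hδ⟩ := hmem
    rw [expMap_ub2, expMap_ub0] at hδ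
    have h2 := DFunLike.congr_fun hδ 2
    have h3 := DFunLike.congr_fun hδ 3
    simp [Finsupp.add_apply, Finsupp.single_apply] at h2 h3
    omega
  refine ⟨∑ γ ∈ H.support, monomial (γ - Finsupp.single 2 (γ 3)) (coeff γ H), ?_⟩
  rw [map_sum]
  conv_rhs => rw [H.as_sum]
  refine Finset.sum_congr rfl fun γ hγ => ?_
  rw [aeval_family_monomial, expMap_ub2]
  have h3 : ((γ - Finsupp.single 2 (γ 3) : Fin 4 →₀ ℕ)) 3 = γ 3 := by
    simp [Finsupp.tsub_apply, Finsupp.single_apply]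
  rw [h3]
  have hle := hsupp γ hγ
  have key : (γ - Finsupp.single 2 (γ 3)) + Finsupp.single 2 (γ 3) = γ := by
    ext j
    simp only [Finsupp.add_apply, Finsupp.tsub_apply, Finsupp.single_apply]
    split_ifs with hj
    · subst hj; omega
    · omega
  rw [key]

/-! ### The substitution homomorphisms -/

/-- `w·v` -/
def s : R := w₁ * v₁ + w₂ * v₂ + w₃ * v₃

def V6 : Fin 6 → R := ![w₁, w₂, w₃, v₁, v₂, v₃]
def G6 : Fin 6 → R := ![w₁, w₂, w₃, g₁, g₂, g₃]
def c4 : Fin 4 → R := ![w₁, w₂, w₃, s]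
def E3 : Fin 6 → R4 := ![X 0, X 1, X 2, 0, 0, X 3]
def E1 : Fin 6 → R4 := ![X 0, X 1, X 2, X 3, 0, 0]
def S3 : Fin 6 → R := ![w₁, w₂, w₃, 0, 0, s]
def S1 : Fin 6 → R := ![w₁, w₂, w₃, s, 0, 0]
def M3 : Fin 6 → R := ![w₁, w₂, w₃, w₃ * v₁, w₃ * v₂, w₃ * v₃]
def M1 : Fin 6 → R := ![w₁, w₂, w₃, w₁ * v₁, w₁ * v₂, w₁ * v₃]
def M13 : Fin 6 → R := ![w₁, w₂, w₃, w₃ * (w₁ * v₁), w₃ * (w₁ * v₂), w₃ * (w₁ * v₃)]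
def D0 : Fin 4 → R := ![w₁, w₂, w₃, w₁ * s]
def D2 : Fin 4 → R := ![w₁, w₂, w₃, w₃ * s]

def σ0 : R →ₐ[ℚ] R := aeval ![0, 0, 0, w₁, w₂, w₃, v₁, v₂, v₃]
def φ₁ : R →ₐ[ℚ] R := aeval ![0, v₃, -v₂, w₁, w₂, w₃, w₁ * v₁, w₁ * v₂, w₁ * v₃]
def φ₃ : R →ₐ[ℚ] R := aeval ![v₂, -v₁, 0, w₁, w₂, w₃, w₃ * v₁, w₃ * v₂, w₃ * v₃]
def μ₁ : R →ₐ[ℚ] R := aeval ![t₁, t₂, t₃, w₁, w₂, w₃, w₁ * v₁, w₁ * v₂, w₁ * v₃]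
def μ₃ : R →ₐ[ℚ] R := aeval (fun i => monomial (u3 i) (1:ℚ))
def χ : R →ₐ[ℚ] R := aeval ![t₁, t₂, t₃, w₁, w₂, w₃, 0, 0, v₃]
def ι : R4 →ₐ[ℚ] R := aeval c4
def β₀ : R4 →ₐ[ℚ] R4 := aeval (fun i => monomial (ub0 i) (1:ℚ))
def β₂ : R4 →ₐ[ℚ] R4 := aeval (fun i => monomial (ub2 i) (1:ℚ))

lemma X_mul_X {m : ℕ} (i j : Fin m) :
    (X i : MvPolynomial (Fin m) ℚ) * X j
      = monomial (Finsupp.single i 1 + Finsupp.single j 1) 1 := by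
  rw [X_eq_monomial' i, X_eq_monomial' j, monomial_mul, one_mul]

lemma hom_aeval {S T : Type*} [CommSemiring S] [CommSemiring T] [Algebra ℚ S] [Algebra ℚ T]
    {k : ℕ} (F : Fin k → S) (φ : S →ₐ[ℚ] T) (G : Fin k → T) (h : ∀ i, φ (F i) = G i)
    (P : MvPolynomial (Fin k) ℚ) : φ (aeval F P) = aeval G P := by
  have h2 : φ.comp (aeval F) = aeval G := by
    rw [comp_aeval]
    exact congrArg _ (funext h)
  exact DFunLike.congr_fun h2 P

lemma sig0_0 : σ0 t₁ = 0 := aeval_X _ 0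
lemma sig0_1 : σ0 t₂ = 0 := aeval_X _ 1
lemma sig0_2 : σ0 t₃ = 0 := aeval_X _ 2
lemma sig0_3 : σ0 w₁ = w₁ := aeval_X _ 3
lemma sig0_4 : σ0 w₂ = w₂ := aeval_X _ 4
lemma sig0_5 : σ0 w₃ = w₃ := aeval_X _ 5
lemma sig0_6 : σ0 v₁ = v₁ := aeval_X _ 6
lemma sig0_7 : σ0 v₂ = v₂ := aeval_X _ 7
lemma sig0_8 : σ0 v₃ = v₃ := aeval_X _ 8

lemma phi1_0 : φ₁ t₁ = 0 := aeval_X _ 0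
lemma phi1_1 : φ₁ t₂ = v₃ := aeval_X _ 1
lemma phi1_2 : φ₁ t₃ = -v₂ := aeval_X _ 2
lemma phi1_3 : φ₁ w₁ = w₁ := aeval_X _ 3
lemma phi1_4 : φ₁ w₂ = w₂ := aeval_X _ 4
lemma phi1_5 : φ₁ w₃ = w₃ := aeval_X _ 5
lemma phi1_6 : φ₁ v₁ = w₁ * v₁ := aeval_X _ 6
lemma phi1_7 : φ₁ v₂ = w₁ * v₂ := aeval_X _ 7
lemma phi1_8 : φ₁ v₃ = w₁ * v₃ := aeval_X _ 8

lemma phi3_0 : φ₃ t₁ = v₂ := aeval_X _ 0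
lemma phi3_1 : φ₃ t₂ = -v₁ := aeval_X _ 1
lemma phi3_2 : φ₃ t₃ = 0 := aeval_X _ 2
lemma phi3_3 : φ₃ w₁ = w₁ := aeval_X _ 3
lemma phi3_4 : φ₃ w₂ = w₂ := aeval_X _ 4
lemma phi3_5 : φ₃ w₃ = w₃ := aeval_X _ 5
lemma phi3_6 : φ₃ v₁ = w₃ * v₁ := aeval_X _ 6
lemma phi3_7 : φ₃ v₂ = w₃ * v₂ := aeval_X _ 7
lemma phi3_8 : φ₃ v₃ = w₃ * v₃ := aeval_X _ 8

lemma mu1_0 : μ₁ t₁ = t₁ := aeval_X _ 0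
lemma mu1_1 : μ₁ t₂ = t₂ := aeval_X _ 1
lemma mu1_2 : μ₁ t₃ = t₃ := aeval_X _ 2
lemma mu1_3 : μ₁ w₁ = w₁ := aeval_X _ 3
lemma mu1_4 : μ₁ w₂ = w₂ := aeval_X _ 4
lemma mu1_5 : μ₁ w₃ = w₃ := aeval_X _ 5
lemma mu1_6 : μ₁ v₁ = w₁ * v₁ := aeval_X _ 6
lemma mu1_7 : μ₁ v₂ = w₁ * v₂ := aeval_X _ 7
lemma mu1_8 : μ₁ v₃ = w₁ * v₃ := aeval_X _ 8

lemma chi_0 : χ t₁ = t₁ := aeval_X _ 0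
lemma chi_1 : χ t₂ = t₂ := aeval_X _ 1
lemma chi_2 : χ t₃ = t₃ := aeval_X _ 2
lemma chi_3 : χ w₁ = w₁ := aeval_X _ 3
lemma chi_4 : χ w₂ = w₂ := aeval_X _ 4
lemma chi_5 : χ w₃ = w₃ := aeval_X _ 5
lemma chi_6 : χ v₁ = 0 := aeval_X _ 6
lemma chi_7 : χ v₂ = 0 := aeval_X _ 7
lemma chi_8 : χ v₃ = v₃ := aeval_X _ 8

lemma mu3_0 : μ₃ t₁ = t₁ := by
  rw [show μ₃ t₁ = monomial (Finsupp.single (0:Fin 9) 1) (1:ℚ) from aeval_X _ 0]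
  exact (X_eq_monomial' 0).symm
lemma mu3_1 : μ₃ t₂ = t₂ := by
  rw [show μ₃ t₂ = monomial (Finsupp.single (1:Fin 9) 1) (1:ℚ) from aeval_X _ 1]
  exact (X_eq_monomial' 1).symm
lemma mu3_2 : μ₃ t₃ = t₃ := by
  rw [show μ₃ t₃ = monomial (Finsupp.single (2:Fin 9) 1) (1:ℚ) from aeval_X _ 2]
  exact (X_eq_monomial' 2).symm
lemma mu3_3 : μ₃ w₁ = w₁ := by
  rw [show μ₃ w₁ = monomial (Finsupp.single (3:Fin 9) 1) (1:ℚ) from aeval_X _ 3]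
  exact (X_eq_monomial' 3).symm
lemma mu3_4 : μ₃ w₂ = w₂ := by
  rw [show μ₃ w₂ = monomial (Finsupp.single (4:Fin 9) 1) (1:ℚ) from aeval_X _ 4]
  exact (X_eq_monomial' 4).symm
lemma mu3_5 : μ₃ w₃ = w₃ := by
  rw [show μ₃ w₃ = monomial (Finsupp.single (5:Fin 9) 1) (1:ℚ) from aeval_X _ 5]
  exact (X_eq_monomial' 5).symm
lemma mu3_6 : μ₃ v₁ = w₃ * v₁ := by
  rw [show μ₃ v₁ = monomial (Finsupp.single (5:Fin 9) 1 + Finsupp.single 6 1) (1:ℚ) from aeval_X _ 6,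
    ← X_mul_X (5:Fin 9) 6]
  rfl
lemma mu3_7 : μ₃ v₂ = w₃ * v₂ := by
  rw [show μ₃ v₂ = monomial (Finsupp.single (5:Fin 9) 1 + Finsupp.single 7 1) (1:ℚ) from aeval_X _ 7,
    ← X_mul_X (5:Fin 9) 7]
  rfl
lemma mu3_8 : μ₃ v₃ = w₃ * v₃ := by
  rw [show μ₃ v₃ = monomial (Finsupp.single (5:Fin 9) 1 + Finsupp.single 8 1) (1:ℚ) from aeval_X _ 8,
    ← X_mul_X (5:Fin 9) 8]
  rfl

lemma iota_0 : ι (X 0) = w₁ := aeval_X _ 0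
lemma iota_1 : ι (X 1) = w₂ := aeval_X _ 1
lemma iota_2 : ι (X 2) = w₃ := aeval_X _ 2
lemma iota_3 : ι (X 3) = s := aeval_X _ 3


/-! ### Compatibility of the homomorphisms with the generator families -/

lemma hσG : ∀ i, σ0 (G6 i) = V6 i := by
  intro i
  fin_cases i
  · exact sig0_3
  · exact sig0_4
  · exact sig0_5
  · show σ0 g₁ = v₁
    unfold g₁
    simp only [map_add, map_mul, map_neg, sig0_0, sig0_1, sig0_2, sig0_4, sig0_5, sig0_6]
    ring
  · show σ0 g₂ = v₂
    unfold g₂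
    simp only [map_add, map_sub, map_mul, sig0_0, sig0_1, sig0_2, sig0_3, sig0_5, sig0_7]
    ring
  · show σ0 g₃ = v₃
    unfold g₃
    simp only [map_add, map_mul, map_neg, sig0_0, sig0_1, sig0_3, sig0_4, sig0_8]
    ring

lemma hσV : ∀ i, σ0 (V6 i) = V6 i := by
  intro i
  fin_cases i
  exacts [sig0_3, sig0_4, sig0_5, sig0_6, sig0_7, sig0_8]

lemma hφ3G : ∀ i, φ₃ (G6 i) = S3 i := by
  intro i
  fin_cases i
  · exact phi3_3
  · exact phi3_4
  · exact phi3_5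
  · show φ₃ g₁ = 0
    unfold g₁
    simp only [map_add, map_mul, map_neg, phi3_0, phi3_1, phi3_2, phi3_4, phi3_5, phi3_6]
    ring
  · show φ₃ g₂ = 0
    unfold g₂
    simp only [map_add, map_sub, map_mul, phi3_0, phi3_1, phi3_2, phi3_3, phi3_5, phi3_7]
    ring
  · show φ₃ g₃ = s
    unfold g₃ s
    simp only [map_add, map_mul, map_neg, phi3_0, phi3_1, phi3_3, phi3_4, phi3_8]
    ring

lemma hφ3V : ∀ i, φ₃ (V6 i) = M3 i := by
  intro i
  fin_cases i
  exacts [phi3_3, phi3_4, phi3_5, phi3_6, phi3_7, phi3_8]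

lemma hμ3V : ∀ i, μ₃ (V6 i) = M3 i := by
  intro i
  fin_cases i
  exacts [mu3_3, mu3_4, mu3_5, mu3_6, mu3_7, mu3_8]

lemma hφ1G : ∀ i, φ₁ (G6 i) = S1 i := by
  intro i
  fin_cases i
  · exact phi1_3
  · exact phi1_4
  · exact phi1_5
  · show φ₁ g₁ = s
    unfold g₁ s
    simp only [map_add, map_mul, map_neg, phi1_0, phi1_1, phi1_2, phi1_4, phi1_5, phi1_6]
    ring
  · show φ₁ g₂ = 0
    unfold g₂
    simp only [map_add, map_sub, map_mul, phi1_0, phi1_1, phi1_2, phi1_3, phi1_5, phi1_7]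
    ring
  · show φ₁ g₃ = 0
    unfold g₃
    simp only [map_add, map_mul, map_neg, phi1_0, phi1_1, phi1_3, phi1_4, phi1_8]
    ring

lemma hφ1V : ∀ i, φ₁ (V6 i) = M1 i := by
  intro i
  fin_cases i
  exacts [phi1_3, phi1_4, phi1_5, phi1_6, phi1_7, phi1_8]

lemma hμ1V : ∀ i, μ₁ (V6 i) = M1 i := by
  intro i
  fin_cases i
  exacts [mu1_3, mu1_4, mu1_5, mu1_6, mu1_7, mu1_8]

lemma hμ1M3 : ∀ i, μ₁ (M3 i) = M13 i := by
  intro i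
  fin_cases i
  · exact mu1_3
  · exact mu1_4
  · exact mu1_5
  · show μ₁ (w₃ * v₁) = w₃ * (w₁ * v₁)
    rw [map_mul, mu1_5, mu1_6]
  · show μ₁ (w₃ * v₂) = w₃ * (w₁ * v₂)
    rw [map_mul, mu1_5, mu1_7]
  · show μ₁ (w₃ * v₃) = w₃ * (w₁ * v₃)
    rw [map_mul, mu1_5, mu1_8]

lemma hμ3M1 : ∀ i, μ₃ (M1 i) = M13 i := by
  intro i
  fin_cases i
  · exact mu3_3
  · exact mu3_4
  · exact mu3_5
  · show μ₃ (w₁ * v₁) = w₃ * (w₁ * v₁)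
    rw [map_mul, mu3_3, mu3_6]; ring
  · show μ₃ (w₁ * v₂) = w₃ * (w₁ * v₂)
    rw [map_mul, mu3_3, mu3_7]; ring
  · show μ₃ (w₁ * v₃) = w₃ * (w₁ * v₃)
    rw [map_mul, mu3_3, mu3_8]; ring

lemma hιE3 : ∀ i, ι (E3 i) = S3 i := by
  intro i
  fin_cases i
  · exact iota_0
  · exact iota_1
  · exact iota_2
  · show ι 0 = 0; exact map_zero ι
  · show ι 0 = 0; exact map_zero ι
  · exact iota_3

lemma hιE1 : ∀ i, ι (E1 i) = S1 i := by
  intro i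
  fin_cases i
  · exact iota_0
  · exact iota_1
  · exact iota_2
  · exact iota_3
  · show ι 0 = 0; exact map_zero ι
  · show ι 0 = 0; exact map_zero ι

lemma hμ1c4 : ∀ i, μ₁ (c4 i) = D0 i := by
  intro i
  fin_cases i
  · exact mu1_3
  · exact mu1_4
  · exact mu1_5
  · show μ₁ s = w₁ * s
    unfold s
    simp only [map_add, map_mul, mu1_3, mu1_4, mu1_5, mu1_6, mu1_7, mu1_8]
    ring

lemma hμ3c4 : ∀ i, μ₃ (c4 i) = D2 i := by
  intro i
  fin_cases i
  · exact mu3_3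
  · exact mu3_4
  · exact mu3_5
  · show μ₃ s = w₃ * s
    unfold s
    simp only [map_add, map_mul, mu3_3, mu3_4, mu3_5, mu3_6, mu3_7, mu3_8]
    ring

lemma hιb0 : ∀ i, ι ((fun j => monomial (ub0 j) (1:ℚ)) i) = D0 i := by
  intro i
  fin_cases i
  · show ι (monomial (ub0 0) (1:ℚ)) = w₁
    rw [show ub0 0 = Finsupp.single (0:Fin 4) 1 from rfl, ← X_eq_monomial']
    exact iota_0
  · show ι (monomial (ub0 1) (1:ℚ)) = w₂
    rw [show ub0 1 = Finsupp.single (1:Fin 4) 1 from rfl, ← X_eq_monomial']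
    exact iota_1
  · show ι (monomial (ub0 2) (1:ℚ)) = w₃
    rw [show ub0 2 = Finsupp.single (2:Fin 4) 1 from rfl, ← X_eq_monomial']
    exact iota_2
  · show ι (monomial (ub0 3) (1:ℚ)) = w₁ * s
    rw [show ub0 3 = Finsupp.single (0:Fin 4) 1 + Finsupp.single 3 1 from rfl,
      ← X_mul_X (0:Fin 4) 3, map_mul, iota_0, iota_3]

lemma hιb2 : ∀ i, ι ((fun j => monomial (ub2 j) (1:ℚ)) i) = D2 i := by
  intro i
  fin_cases i
  · show ι (monomial (ub2 0) (1:ℚ)) = w₁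
    rw [show ub2 0 = Finsupp.single (0:Fin 4) 1 from rfl, ← X_eq_monomial']
    exact iota_0
  · show ι (monomial (ub2 1) (1:ℚ)) = w₂
    rw [show ub2 1 = Finsupp.single (1:Fin 4) 1 from rfl, ← X_eq_monomial']
    exact iota_1
  · show ι (monomial (ub2 2) (1:ℚ)) = w₃
    rw [show ub2 2 = Finsupp.single (2:Fin 4) 1 from rfl, ← X_eq_monomial']
    exact iota_2
  · show ι (monomial (ub2 3) (1:ℚ)) = w₃ * s
    rw [show ub2 3 = Finsupp.single (2:Fin 4) 1 + Finsupp.single 3 1 from rfl,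
      ← X_mul_X (2:Fin 4) 3, map_mul, iota_2, iota_3]

lemma hχc4 : ∀ i, χ (c4 i) = (fun j => monomial (uJ j) (1:ℚ)) i := by
  intro i
  fin_cases i
  · show χ w₁ = monomial (uJ 0) (1:ℚ)
    rw [chi_3, show uJ 0 = Finsupp.single (3:Fin 9) 1 from rfl, ← X_eq_monomial']
    rfl
  · show χ w₂ = monomial (uJ 1) (1:ℚ)
    rw [chi_4, show uJ 1 = Finsupp.single (4:Fin 9) 1 from rfl, ← X_eq_monomial']
    rfl
  · show χ w₃ = monomial (uJ 2) (1:ℚ)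
    rw [chi_5, show uJ 2 = Finsupp.single (5:Fin 9) 1 from rfl, ← X_eq_monomial']
    rfl
  · show χ s = monomial (uJ 3) (1:ℚ)
    have : χ s = w₃ * v₃ := by
      unfold s
      simp only [map_add, map_mul, chi_3, chi_4, chi_5, chi_6, chi_7, chi_8]
      ring
    rw [this, show uJ 3 = Finsupp.single (5:Fin 9) 1 + Finsupp.single 8 1 from rfl,
      ← X_mul_X (5:Fin 9) 8]
    rfl

/-! ### Injectivity -/

lemma iota_inj : Function.Injective ι := by
  intro a b hab
  apply injective_aeval_family uJ inj_uJ
  have h1 : ∀ y : R4, (aeval (fun i => monomial (uJ i) (1:ℚ))) y = χ (ι y) := fun y =>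
    (hom_aeval c4 χ _ hχc4 y).symm
  rw [h1 a, h1 b, hab]

/-! ### Set descriptions of the generating sets -/

lemma setG_eq : ({w₁, w₂, w₃, g₁, g₂, g₃} : Set R) = Set.range G6 := by
  ext y
  simp only [Set.mem_insert_iff, Set.mem_singleton_iff, Set.mem_range]
  constructor
  · rintro (rfl|rfl|rfl|rfl|rfl|rfl)
    exacts [⟨0, rfl⟩, ⟨1, rfl⟩, ⟨2, rfl⟩, ⟨3, rfl⟩, ⟨4, rfl⟩, ⟨5, rfl⟩]
  · rintro ⟨i, rfl⟩
    fin_cases i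
    exacts [Or.inl rfl, Or.inr (Or.inl rfl), Or.inr (Or.inr (Or.inl rfl)),
      Or.inr (Or.inr (Or.inr (Or.inl rfl))), Or.inr (Or.inr (Or.inr (Or.inr (Or.inl rfl)))),
      Or.inr (Or.inr (Or.inr (Or.inr (Or.inr rfl))))]

lemma setV_eq : ({w₁, w₂, w₃, v₁, v₂, v₃} : Set R) = Set.range V6 := by
  ext y
  simp only [Set.mem_insert_iff, Set.mem_singleton_iff, Set.mem_range]
  constructor
  · rintro (rfl|rfl|rfl|rfl|rfl|rfl)
    exacts [⟨0, rfl⟩, ⟨1, rfl⟩, ⟨2, rfl⟩, ⟨3, rfl⟩, ⟨4, rfl⟩, ⟨5, rfl⟩]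
  · rintro ⟨i, rfl⟩
    fin_cases i
    exacts [Or.inl rfl, Or.inr (Or.inl rfl), Or.inr (Or.inr (Or.inl rfl)),
      Or.inr (Or.inr (Or.inr (Or.inl rfl))), Or.inr (Or.inr (Or.inr (Or.inr (Or.inl rfl)))),
      Or.inr (Or.inr (Or.inr (Or.inr (Or.inr rfl))))]

lemma setS_eq : ({w₁, w₂, w₃, s} : Set R) = Set.range c4 := by
  ext y
  simp only [Set.mem_insert_iff, Set.mem_singleton_iff, Set.mem_range]
  constructor
  · rintro (rfl|rfl|rfl|rfl)
    exacts [⟨0, rfl⟩, ⟨1, rfl⟩, ⟨2, rfl⟩, ⟨3, rfl⟩]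
  · rintro ⟨i, rfl⟩
    fin_cases i
    exacts [Or.inl rfl, Or.inr (Or.inl rfl), Or.inr (Or.inr (Or.inl rfl)),
      Or.inr (Or.inr (Or.inr rfl))]

/-- Translational invariants of a screw: the intersection of `ℚ[w₁, w₂, w₃, g₁, g₂, g₃]`
with `ℚ[w₁, w₂, w₃, v₁, v₂, v₃]` equals `ℚ[w₁, w₂, w₃, w·v]`. -/
theorem translational_invariants :
    Algebra.adjoin ℚ {w₁, w₂, w₃, g₁, g₂, g₃} ⊓
        Algebra.adjoin ℚ {w₁, w₂, w₃, v₁, v₂, v₃} =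
      Algebra.adjoin ℚ {w₁, w₂, w₃, w₁ * v₁ + w₂ * v₂ + w₃ * v₃} := by
  have hA : Algebra.adjoin ℚ ({w₁, w₂, w₃, g₁, g₂, g₃} : Set R) = (aeval G6).range := by
    rw [setG_eq, Algebra.adjoin_range_eq_range_aeval]
  have hB : Algebra.adjoin ℚ ({w₁, w₂, w₃, v₁, v₂, v₃} : Set R) = (aeval V6).range := by
    rw [setV_eq, Algebra.adjoin_range_eq_range_aeval]
  have hC : Algebra.adjoin ℚ ({w₁, w₂, w₃, w₁ * v₁ + w₂ * v₂ + w₃ * v₃} : Set R)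
      = (aeval c4).range := by
    rw [show ({w₁, w₂, w₃, w₁ * v₁ + w₂ * v₂ + w₃ * v₃} : Set R) = {w₁, w₂, w₃, s} from rfl,
      setS_eq, Algebra.adjoin_range_eq_range_aeval]
  apply le_antisymm
  · -- hard direction
    intro x hx
    rw [Algebra.mem_inf] at hx
    obtain ⟨hxA, hxB⟩ := hx
    rw [hA, AlgHom.mem_range] at hxA
    obtain ⟨P, hP⟩ := hxA
    rw [hB, AlgHom.mem_range] at hxB
    obtain ⟨Q, hQ⟩ := hxB
    have hxP : x = aeval V6 P := by
      have h1 : σ0 x = aeval V6 P := by rw [← hP, hom_aeval G6 σ0 V6 hσG]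
      have h2 : σ0 x = x := by rw [← hQ, hom_aeval V6 σ0 V6 hσV]
      rw [← h2, h1]
    have master : aeval G6 P = aeval V6 P := hP.trans hxP
    have hμ3x : μ₃ x = ι (aeval E3 P) := by
      calc μ₃ x = aeval M3 P := by rw [hxP, hom_aeval V6 μ₃ M3 hμ3V]
      _ = φ₃ (aeval V6 P) := (hom_aeval V6 φ₃ M3 hφ3V P).symm
      _ = φ₃ (aeval G6 P) := by rw [master]
      _ = aeval S3 P := hom_aeval G6 φ₃ S3 hφ3G P
      _ = ι (aeval E3 P) := (hom_aeval E3 ι S3 hιE3 P).symm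
    have hμ1x : μ₁ x = ι (aeval E1 P) := by
      calc μ₁ x = aeval M1 P := by rw [hxP, hom_aeval V6 μ₁ M1 hμ1V]
      _ = φ₁ (aeval V6 P) := (hom_aeval V6 φ₁ M1 hφ1V P).symm
      _ = φ₁ (aeval G6 P) := by rw [master]
      _ = aeval S1 P := hom_aeval G6 φ₁ S1 hφ1G P
      _ = ι (aeval E1 P) := (hom_aeval E1 ι S1 hιE1 P).symm
    have hcomm : μ₁ (μ₃ x) = μ₃ (μ₁ x) := by
      calc μ₁ (μ₃ x) = μ₁ (aeval M3 P) := by rw [hxP, hom_aeval V6 μ₃ M3 hμ3V]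
      _ = aeval M13 P := hom_aeval M3 μ₁ M13 hμ1M3 P
      _ = μ₃ (aeval M1 P) := (hom_aeval M1 μ₃ M13 hμ3M1 P).symm
      _ = μ₃ (μ₁ x) := by rw [hxP, hom_aeval V6 μ₁ M1 hμ1V]
    have hcompβ0 : ∀ y : R4, μ₁ (ι y) = ι (β₀ y) := by
      intro y
      rw [show (ι y : R) = aeval c4 y from rfl, hom_aeval c4 μ₁ D0 hμ1c4 y,
        show β₀ y = aeval (fun j => monomial (ub0 j) (1:ℚ)) y from rfl,
        hom_aeval (fun j => monomial (ub0 j) (1:ℚ)) ι D0 hιb0 y]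
    have hcompβ2 : ∀ y : R4, μ₃ (ι y) = ι (β₂ y) := by
      intro y
      rw [show (ι y : R) = aeval c4 y from rfl, hom_aeval c4 μ₃ D2 hμ3c4 y,
        show β₂ y = aeval (fun j => monomial (ub2 j) (1:ℚ)) y from rfl,
        hom_aeval (fun j => monomial (ub2 j) (1:ℚ)) ι D2 hιb2 y]
    have hb : β₀ (aeval E3 P) = β₂ (aeval E1 P) := by
      apply iota_inj
      rw [← hcompβ0, ← hcompβ2, ← hμ3x, ← hμ1x, hcomm]
    obtain ⟨G, hG⟩ := division_lemma (aeval E3 P) (aeval E1 P) hb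
    have hxG : x = ι G := by
      apply injective_aeval_family u3 inj_u3
      show μ₃ x = μ₃ (ι G)
      rw [hμ3x, hcompβ2 G,
        show β₂ G = aeval (fun i => monomial (ub2 i) (1:ℚ)) G from rfl, hG]
    rw [hC, AlgHom.mem_range]
    exact ⟨G, hxG.symm⟩
  · -- easy direction
    apply Algebra.adjoin_le
    rintro y hy
    simp only [Set.mem_insert_iff, Set.mem_singleton_iff] at hy
    have mA : ∀ z ∈ ({w₁, w₂, w₃, g₁, g₂, g₃} : Set R),
        z ∈ Algebra.adjoin ℚ ({w₁, w₂, w₃, g₁, g₂, g₃} : Set R) := fun z hz =>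
      Algebra.subset_adjoin hz
    have mB : ∀ z ∈ ({w₁, w₂, w₃, v₁, v₂, v₃} : Set R),
        z ∈ Algebra.adjoin ℚ ({w₁, w₂, w₃, v₁, v₂, v₃} : Set R) := fun z hz =>
      Algebra.subset_adjoin hz
    rcases hy with rfl|rfl|rfl|rfl
    · rw [SetLike.mem_coe, Algebra.mem_inf]
      exact ⟨mA _ (by simp only [Set.mem_insert_iff, Set.mem_singleton_iff]; tauto),
        mB _ (by simp only [Set.mem_insert_iff, Set.mem_singleton_iff]; tauto)⟩
    · rw [SetLike.mem_coe, Algebra.mem_inf]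
      exact ⟨mA _ (by simp only [Set.mem_insert_iff, Set.mem_singleton_iff]; tauto),
        mB _ (by simp only [Set.mem_insert_iff, Set.mem_singleton_iff]; tauto)⟩
    · rw [SetLike.mem_coe, Algebra.mem_inf]
      exact ⟨mA _ (by simp only [Set.mem_insert_iff, Set.mem_singleton_iff]; tauto),
        mB _ (by simp only [Set.mem_insert_iff, Set.mem_singleton_iff]; tauto)⟩
    · rw [SetLike.mem_coe, Algebra.mem_inf]
      constructor
      · have h : (w₁ * v₁ + w₂ * v₂ + w₃ * v₃ : R) = w₁ * g₁ + w₂ * g₂ + w₃ * g₃ := by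
          unfold g₁ g₂ g₃
          ring
        rw [h]
        refine add_mem (add_mem (mul_mem ?_ ?_) (mul_mem ?_ ?_)) (mul_mem ?_ ?_) <;>
          exact mA _ (by simp only [Set.mem_insert_iff, Set.mem_singleton_iff]; tauto)
      · refine add_mem (add_mem (mul_mem ?_ ?_) (mul_mem ?_ ?_)) (mul_mem ?_ ?_) <;>
          exact mB _ (by simp only [Set.mem_insert_iff, Set.mem_singleton_iff]; tauto)

end ScrewExample
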